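/- Let r₀, Q ∈ ℝ with r₀ > |Q| ≥ 0, and let S > 0. Then there exists c₀ > 0 such that for every c ∈ (0, c₀), the function f(s) = r₀·√(1 + c·s²) satisfies f''(s) < (1/(2 f(s)))·(1 − f'(s)² − Q²/f(s)²) for all s ∈ [0, S]. -/

import Mathlib

lemma sqrt_aux_deriv (r₀ c : ℝ) (hc : 0 < c) :
    deriv (fun t => r₀ * Real.sqrt (1 + c * t ^ 2))
      = fun t => r₀ * c * t / Real.sqrt (1 + c * t ^ 2) := by
  funext t
  have h1 : (0:ℝ) < 1 + c * t ^ 2 := by positivity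
  have hd : HasDerivAt (fun t : ℝ => 1 + c * t ^ 2) (c * (2 * t)) t := by
    simpa using ((hasDerivAt_pow 2 t).const_mul c).const_add 1
  have h := (hd.sqrt (by positivity)).const_mul r₀
  rw [h.deriv]
  have hs : Real.sqrt (1 + c * t ^ 2) ≠ 0 := by positivity
  field_simp

lemma sqrt_aux_deriv2 (r₀ c : ℝ) (hc : 0 < c) (s : ℝ) :
    deriv (fun t => r₀ * c * t / Real.sqrt (1 + c * t ^ 2)) s
      = r₀ * c / ((1 + c * s ^ 2) * Real.sqrt (1 + c * s ^ 2)) := by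
  have h1 : (0:ℝ) < 1 + c * s ^ 2 := by positivity
  have hs : Real.sqrt (1 + c * s ^ 2) ≠ 0 := by positivity
  have hd : HasDerivAt (fun t : ℝ => 1 + c * t ^ 2) (c * (2 * s)) s := by
    simpa using ((hasDerivAt_pow 2 s).const_mul c).const_add 1
  have hv : HasDerivAt (fun t : ℝ => Real.sqrt (1 + c * t ^ 2))
      (c * (2 * s) / (2 * Real.sqrt (1 + c * s ^ 2))) s := hd.sqrt (by positivity)
  have hu : HasDerivAt (fun t : ℝ => r₀ * c * t) (r₀ * c) s := by
    simpa using (hasDerivAt_id s).const_mul (r₀ * c)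
  have h : HasDerivAt (fun t => r₀ * c * t / Real.sqrt (1 + c * t ^ 2)) _ s := hu.div hv hs
  rw [h.deriv]
  have hsq : Real.sqrt (1 + c * s ^ 2) ^ 2 = 1 + c * s ^ 2 := Real.sq_sqrt h1.le
  have hmul : Real.sqrt (1 + c * s ^ 2) * Real.sqrt (1 + c * s ^ 2) = 1 + c * s ^ 2 :=
    Real.mul_self_sqrt h1.le
  have key : r₀ * c * Real.sqrt (1 + c * s ^ 2)
      - r₀ * c * s * (c * (2 * s) / (2 * Real.sqrt (1 + c * s ^ 2)))
      = r₀ * c / Real.sqrt (1 + c * s ^ 2) := by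
    field_simp
    linear_combination r₀ * hsq
  rw [hsq, key, div_div]
  ring_nf

set_option maxHeartbeats 1000000 in
theorem stmt_14 (r₀ Q S : ℝ) (hr : r₀ > |Q|) (hQ : |Q| ≥ 0) (hS : S > 0) :
    ∃ c₀ > 0, ∀ c ∈ Set.Ioo (0 : ℝ) c₀, ∀ s ∈ Set.Icc (0 : ℝ) S,
      deriv (deriv (fun t => r₀ * Real.sqrt (1 + c * t ^ 2))) s
        < (1 / (2 * (r₀ * Real.sqrt (1 + c * s ^ 2)))) *
            (1 - (deriv (fun t => r₀ * Real.sqrt (1 + c * t ^ 2)) s) ^ 2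
              - Q ^ 2 / (r₀ * Real.sqrt (1 + c * s ^ 2)) ^ 2) := by
  have hr0 : 0 < r₀ := lt_of_le_of_lt (abs_nonneg Q) hr
  have hQ2 : Q ^ 2 < r₀ ^ 2 := by
    have := sq_abs Q
    nlinarith [abs_nonneg Q]
  have hδ : 0 < 1 - Q ^ 2 / r₀ ^ 2 := by
    have : Q ^ 2 / r₀ ^ 2 < 1 := (div_lt_one (by positivity)).mpr hQ2
    linarith
  refine ⟨min 1 ((1 - Q ^ 2 / r₀ ^ 2) / (2 * r₀ ^ 2 + r₀ ^ 2 * S ^ 2 + 1)),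
    by positivity, ?_⟩
  intro c hc s hs
  obtain ⟨hc0, hcu⟩ := hc
  obtain ⟨hs0, hsS⟩ := hs
  have hc1 : c < 1 := lt_of_lt_of_le hcu (min_le_left _ _)
  have hc2 : c < (1 - Q ^ 2 / r₀ ^ 2) / (2 * r₀ ^ 2 + r₀ ^ 2 * S ^ 2 + 1) :=
    lt_of_lt_of_le hcu (min_le_right _ _)
  have hcδ : c * (2 * r₀ ^ 2 + r₀ ^ 2 * S ^ 2 + 1) < 1 - Q ^ 2 / r₀ ^ 2 := by
    have hpos : (0:ℝ) < 2 * r₀ ^ 2 + r₀ ^ 2 * S ^ 2 + 1 := by positivity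
    calc c * (2 * r₀ ^ 2 + r₀ ^ 2 * S ^ 2 + 1)
        < (1 - Q ^ 2 / r₀ ^ 2) / (2 * r₀ ^ 2 + r₀ ^ 2 * S ^ 2 + 1)
            * (2 * r₀ ^ 2 + r₀ ^ 2 * S ^ 2 + 1) := mul_lt_mul_of_pos_right hc2 hpos
      _ = 1 - Q ^ 2 / r₀ ^ 2 := by field_simp
  rw [sqrt_aux_deriv r₀ c hc0, sqrt_aux_deriv2 r₀ c hc0 s]
  beta_reduce
  have hX : (0:ℝ) < 1 + c * s ^ 2 := by positivity
  have ha : 0 < Real.sqrt (1 + c * s ^ 2) := Real.sqrt_pos.mpr hX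
  have ha2 : Real.sqrt (1 + c * s ^ 2) ^ 2 = 1 + c * s ^ 2 := Real.sq_sqrt hX.le
  set a := Real.sqrt (1 + c * s ^ 2) with hadef
  clear_value a
  -- key polynomial inequality
  have hkey : 2 * r₀ ^ 2 * c + r₀ ^ 2 * c ^ 2 * s ^ 2 + Q ^ 2 / r₀ ^ 2 < 1 + c * s ^ 2 := by
    have hs2 : s ^ 2 ≤ S ^ 2 := by nlinarith
    have h3 : c * s ^ 2 ≤ S ^ 2 := by nlinarith [mul_nonneg hc0.le (sq_nonneg s)]
    have h1 : r₀ ^ 2 * c ^ 2 * s ^ 2 ≤ r₀ ^ 2 * c * S ^ 2 := by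
      nlinarith [mul_le_mul_of_nonneg_left h3 (mul_nonneg (sq_nonneg r₀) hc0.le)]
    have hcs : 0 ≤ c * s ^ 2 := mul_nonneg hc0.le (sq_nonneg s)
    nlinarith [mul_pos hr0 hr0]
  rw [show (r₀ * c * s / a) ^ 2 = (r₀ * c * s) ^ 2 / (1 + c * s ^ 2) by rw [div_pow, ha2],
    show (r₀ * a) ^ 2 = r₀ ^ 2 * (1 + c * s ^ 2) by rw [mul_pow, ha2]]
  have hrw : 1 / (2 * (r₀ * a)) *
        (1 - (r₀ * c * s) ^ 2 / (1 + c * s ^ 2) - Q ^ 2 / (r₀ ^ 2 * (1 + c * s ^ 2)))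
      = ((1 + c * s ^ 2) - (r₀ * c * s) ^ 2 - Q ^ 2 / r₀ ^ 2)
        / (2 * r₀ * a * (1 + c * s ^ 2)) := by
    field_simp
  rw [hrw, div_lt_div_iff₀ (mul_pos hX ha) (by positivity)]
  have h4 : 2 * r₀ ^ 2 * c < (1 + c * s ^ 2) - (r₀ * c * s) ^ 2 - Q ^ 2 / r₀ ^ 2 := by
    have he : (r₀ * c * s) ^ 2 = r₀ ^ 2 * c ^ 2 * s ^ 2 := by ring
    linarith [hkey]
  have h5 := mul_lt_mul_of_pos_right h4 (mul_pos hX ha)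
  have he2 : 2 * r₀ ^ 2 * c * ((1 + c * s ^ 2) * a) = r₀ * c * (2 * r₀ * a * (1 + c * s ^ 2)) := by
    ring
  linarith [h5]
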